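/- Let T be a triangulated category and let (X, Y) and (Y, Z) be stable t-structures in T with Z * X = T. Let Q : T → T/(X ∩ Z) be the Verdier quotient functor. Then the pairs (Q(X), Q(Y)), (Q(Y), Q(Z)), and (Q(Z), Q(X)) are all stable t-structures in T/(X ∩ Z); that is, they form a triangle of recollements. -/

import Mathlib

namespace Paper

open CategoryTheory Limits Triangulated Pretriangulated ZeroObject

universe w v u

variable {C : Type u} [Category.{v} C] [HasZeroObject C] [Preadditive C] [HasShift C ℤ]
  [∀ n : ℤ, (shiftFunctor C n).Additive] [Pretriangulated C]

/-- The subcategory of extensions `X * Y`: objects `e` admitting a distinguished triangle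
`x ⟶ e ⟶ y ⟶ x⟦1⟧` with `x ∈ X` and `y ∈ Y`. -/
def star (X Y : Set C) : Set C :=
  {e | ∃ (x y : C) (_ : x ∈ X) (_ : y ∈ Y) (f : x ⟶ e) (g : e ⟶ y) (h : y ⟶ x⟦(1 : ℤ)⟧),
    Triangle.mk f g h ∈ distTriang C}

/-- A (strictly full) triangulated subcategory: a class of objects containing `0`, closed
under isomorphisms, suspension, desuspension and extensions. -/
structure IsTriangulatedSubcat (S : Set C) : Prop where
  zero_mem : (0 : C) ∈ S
  mem_of_iso : ∀ {a b : C}, (a ≅ b) → a ∈ S → b ∈ S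
  shift_mem : ∀ {a : C}, a ∈ S → a⟦(1 : ℤ)⟧ ∈ S
  unshift_mem : ∀ {a : C}, a ∈ S → a⟦(-1 : ℤ)⟧ ∈ S
  ext₂ : ∀ {a e b : C} (f : a ⟶ e) (g : e ⟶ b) (h : b ⟶ a⟦(1 : ℤ)⟧),
    (Triangle.mk f g h ∈ distTriang C) → a ∈ S → b ∈ S → e ∈ S

/-- A thick subcategory: a triangulated subcategory closed under direct summands
(equivalently, retracts). -/
structure IsThickSubcat (S : Set C) : Prop extends IsTriangulatedSubcat S where
  mem_of_retract : ∀ {a s : C}, s ∈ S → (∃ (i : a ⟶ s) (p : s ⟶ a), i ≫ p = 𝟙 a) → a ∈ S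

/-- `(U, V)` is a stable t-structure in the (triangulated sub)category whose class of
objects is `S`: both are triangulated subcategories contained in `S`, `Hom(U, V) = 0`
and `U * V = S`. -/
structure IsStableTStructureIn (S U V : Set C) : Prop where
  subsetU : U ⊆ S
  subsetV : V ⊆ S
  triU : IsTriangulatedSubcat U
  triV : IsTriangulatedSubcat V
  hom_zero : ∀ {u v : C}, u ∈ U → v ∈ V → ∀ f : u ⟶ v, f = 0
  star_eq : star U V = S

lemma IsTriangulatedSubcat.shift_all {S : Set C} (hS : IsTriangulatedSubcat S) (a : C) (n : ℤ)
    (ha : a ∈ S) : a⟦n⟧ ∈ S := by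
  induction n using Int.induction_on with
  | zero => exact hS.mem_of_iso ((shiftFunctorZero C ℤ).app a).symm ha
  | succ i hi =>
      exact hS.mem_of_iso ((shiftFunctorAdd' C (i : ℤ) 1 ((i : ℤ) + 1) rfl).app a).symm
        (hS.shift_mem hi)
  | pred i hi =>
      exact hS.mem_of_iso
        ((shiftFunctorAdd' C (-(i : ℤ)) (-1) (-(i : ℤ) - 1) (by ring)).app a).symm
        (hS.unshift_mem hi)

/-- The Mathlib `Triangulated.Subcategory` associated to a class of objects satisfying
`IsTriangulatedSubcat`. -/
def IsTriangulatedSubcat.toSubcategory {S : Set C} (hS : IsTriangulatedSubcat S) :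
    ObjectProperty C :=
  fun c => c ∈ S

instance IsTriangulatedSubcat.toSubcategory_isTriangulated {S : Set C}
    (hS : IsTriangulatedSubcat S) : hS.toSubcategory.IsTriangulated where
  exists_zero := ⟨0, isZero_zero C, hS.zero_mem⟩
  isStableUnderShiftBy a := ⟨fun X hX => hS.shift_all X a hX⟩
  ext₂' T hT h₁ h₃ := ObjectProperty.le_isoClosure _ _ (hS.ext₂ T.mor₁ T.mor₂ T.mor₃ hT h₁ h₃)

lemma IsTriangulatedSubcat.inter {X Y : Set C} (hX : IsTriangulatedSubcat X)
    (hY : IsTriangulatedSubcat Y) : IsTriangulatedSubcat (X ∩ Y) where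
  zero_mem := ⟨hX.zero_mem, hY.zero_mem⟩
  mem_of_iso := fun e h => ⟨hX.mem_of_iso e h.1, hY.mem_of_iso e h.2⟩
  shift_mem := fun h => ⟨hX.shift_mem h.1, hY.shift_mem h.2⟩
  unshift_mem := fun h => ⟨hX.unshift_mem h.1, hY.unshift_mem h.2⟩
  ext₂ := fun f g h hT ha hb => ⟨hX.ext₂ f g h hT ha.1 hb.1, hY.ext₂ f g h hT ha.2 hb.2⟩

/-- The Verdier quotient of `C` by the triangulated subcategory `S`. -/
abbrev VerdierQuotient {S : Set C} (hS : IsTriangulatedSubcat S) : Type _ :=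
  hS.toSubcategory.trW.Localization

/-- The Verdier quotient functor. -/
noncomputable abbrev Vq {S : Set C} (hS : IsTriangulatedSubcat S) : C ⥤ VerdierQuotient hS :=
  hS.toSubcategory.trW.Q

/-- The essential image of a class of objects under a functor (the closure under
isomorphisms of the image). -/
def QSet {D : Type*} [Category D] (L : C ⥤ D) (S : Set C) : Set D :=
  {d | ∃ s ∈ S, Nonempty (L.obj s ≅ d)}

/-- The right perpendicular class `X^⊥`. -/
def rightPerp (X : Set C) : Set C := {t | ∀ {x : C}, x ∈ X → ∀ f : x ⟶ t, f = 0}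

/-- The left perpendicular class `^⊥X`. -/
def leftPerp (X : Set C) : Set C := {t | ∀ {x : C}, x ∈ X → ∀ f : t ⟶ x, f = 0}


variable [IsTriangulated C]

set_option linter.unusedSectionVars false

section Auxiliary

open MorphismProperty

/-- `obj₂` is determined up to isomorphism by the rest of a distinguished triangle. -/
lemma obj₂_iso {D : Type*} [Category D] [HasZeroObject D] [Preadditive D] [HasShift D ℤ]
    [∀ n : ℤ, (shiftFunctor D n).Additive] [Pretriangulated D]
    {T₂ T₁ : Triangle D} (h₂ : T₂ ∈ distTriang D) (h₁ : T₁ ∈ distTriang D)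
    (e₃ : T₂.obj₃ ≅ T₁.obj₃) (e₁ : T₂.obj₁ ≅ T₁.obj₁)
    (comm : T₂.mor₃ ≫ e₁.hom⟦(1 : ℤ)⟧' = e₃.hom ≫ T₁.mor₃) :
    Nonempty (T₂.obj₂ ≅ T₁.obj₂) := by
  have h₂' := rot_of_distTriang _ (rot_of_distTriang _ h₂)
  have h₁' := rot_of_distTriang _ (rot_of_distTriang _ h₁)
  have J := isoTriangleOfIso₁₂ _ _ h₂' h₁' e₃ ((shiftFunctor D (1 : ℤ)).mapIso e₁) comm
  exact ⟨(shiftFunctor D (1 : ℤ)).preimageIso (Triangle.π₃.mapIso J)⟩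

variable {S : Set C}

lemma IsTriangulatedSubcat.mem_W (hS : IsTriangulatedSubcat S) {a b c : C} {f : a ⟶ b}
    {g : b ⟶ c} {h : c ⟶ a⟦(1 : ℤ)⟧} (hT : Triangle.mk f g h ∈ distTriang C) (hc : c ∈ S) :
    hS.toSubcategory.trW f :=
  ⟨c, g, h, hT, hc⟩

lemma IsTriangulatedSubcat.closedP (hS : IsTriangulatedSubcat S) :
    hS.toSubcategory.IsClosedUnderIsomorphisms :=
  ⟨fun e h => hS.mem_of_iso e h⟩

variable [IsTriangulated C]

noncomputable instance vq_isTriangulated (hS : IsTriangulatedSubcat S) :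
    (Vq hS).IsTriangulated :=
  Triangulated.Localization.isTriangulated_functor _ hS.toSubcategory.trW

/-- Any morphism from `Z` to `X` vanishes in the Verdier quotient by `S = X ∩ Z`
(more generally, any `S` containing `X ∩ Z`). -/
lemma map_zero_of_ZX {X Z : Set C} (hX : IsTriangulatedSubcat X) (hZ : IsTriangulatedSubcat Z)
    (hZX : star Z X = Set.univ) (hS : IsTriangulatedSubcat S)
    (hmem : ∀ {m : C}, m ∈ X → m ∈ Z → m ∈ S)
    {z x : C} (hz : z ∈ Z) (hx : x ∈ X) (g : z ⟶ x) : (Vq hS).map g = 0 := by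
  obtain ⟨c, u, v, hT⟩ := Pretriangulated.distinguished_cocone_triangle g
  have hc : c ∈ star Z X := by rw [hZX]; trivial
  obtain ⟨z₂, x₂, hz₂, hx₂, p, q, r, hT₂⟩ := hc
  obtain ⟨m, w', mv, hT₃⟩ := Pretriangulated.distinguished_cocone_triangle (u ≫ q)
  have O := Triangulated.someOctahedron (u₁₂ := u) (u₂₃ := q) (u₁₃ := u ≫ q) rfl
    (rot_of_distTriang _ hT) (rot_of_distTriang _ hT₂) hT₃
  have hmZ : m ∈ Z := hZ.ext₂ O.m₁ O.m₃ _ O.mem (hZ.shift_mem hz) (hZ.shift_mem hz₂)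
  have hmX : m ∈ X := by
    have := rot_of_distTriang _ hT₃
    exact hX.ext₂ _ _ _ this hx₂ (hX.shift_mem hx)
  have hW : hS.toSubcategory.trW (u ≫ q) := hS.mem_W hT₃ (hmem hmX hmZ)
  have hzero : g ≫ (u ≫ q) = 0 := by
    have h0 : g ≫ u = 0 := comp_distTriang_mor_zero₁₂ _ hT
    rw [← Category.assoc, h0, zero_comp]
  haveI := Localization.inverts (Vq hS) hS.toSubcategory.trW _ hW
  rw [← cancel_mono ((Vq hS).map (u ≫ q)), ← Functor.map_comp, hzero, Functor.map_zero,
    zero_comp]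

lemma hom_zero_XY {X Y : Set C} (hX : IsTriangulatedSubcat X)
    (hSX : S ⊆ X) (hS : IsTriangulatedSubcat S)
    (h0 : ∀ {u v : C}, u ∈ X → v ∈ Y → ∀ f : u ⟶ v, f = 0)
    {x y : C} (hx : x ∈ X) (hy : y ∈ Y) (φ : (Vq hS).obj x ⟶ (Vq hS).obj y) : φ = 0 := by
  obtain ⟨ρ, hρ⟩ := Localization.exists_rightFraction (Vq hS) hS.toSubcategory.trW φ
  obtain ⟨c, sg, sh, hTs, hc⟩ := ρ.hs
  haveI := hS.closedP
  haveI := hX.closedP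
  have hx' : ρ.X' ∈ X := hX.toSubcategory.ext_of_isTriangulatedClosed₁ _ hTs hx (hSX hc)
  have hf : ρ.f = 0 := h0 hx' hy ρ.f
  haveI := Localization.inverts (Vq hS) hS.toSubcategory.trW _ ρ.hs
  rw [← cancel_epi ((Vq hS).map ρ.s), hρ, RightFraction.map_s_comp_map, hf,
    Functor.map_zero, comp_zero]

lemma hom_zero_YZ {Y Z : Set C} (hZ : IsTriangulatedSubcat Z)
    (hSZ : S ⊆ Z) (hS : IsTriangulatedSubcat S)
    (h0 : ∀ {u v : C}, u ∈ Y → v ∈ Z → ∀ f : u ⟶ v, f = 0)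
    {y z : C} (hy : y ∈ Y) (hz : z ∈ Z) (φ : (Vq hS).obj y ⟶ (Vq hS).obj z) : φ = 0 := by
  obtain ⟨ρ, hρ⟩ := Localization.exists_leftFraction (Vq hS) hS.toSubcategory.trW φ
  obtain ⟨c, sg, sh, hTs, hc⟩ := ρ.hs
  have hz' : ρ.Y' ∈ Z := hZ.ext₂ _ _ _ hTs hz (hSZ hc)
  have hf : ρ.f = 0 := h0 hy hz' ρ.f
  haveI := Localization.inverts (Vq hS) hS.toSubcategory.trW _ ρ.hs
  rw [← cancel_mono ((Vq hS).map ρ.s), hρ, LeftFraction.map_comp_map_s, hf,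
    Functor.map_zero, zero_comp]

lemma hom_zero_ZX {X Z : Set C} (hX : IsTriangulatedSubcat X) (hZ : IsTriangulatedSubcat Z)
    (hZX : star Z X = Set.univ) (hSX : S ⊆ X) (hS : IsTriangulatedSubcat S)
    (hmem : ∀ {m : C}, m ∈ X → m ∈ Z → m ∈ S)
    {z x : C} (hz : z ∈ Z) (hx : x ∈ X) (φ : (Vq hS).obj z ⟶ (Vq hS).obj x) : φ = 0 := by
  obtain ⟨ρ, hρ⟩ := Localization.exists_leftFraction (Vq hS) hS.toSubcategory.trW φ
  obtain ⟨c, sg, sh, hTs, hc⟩ := ρ.hs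
  have hx' : ρ.Y' ∈ X := hX.ext₂ _ _ _ hTs hx (hSX hc)
  have hf : (Vq hS).map ρ.f = 0 := map_zero_of_ZX hX hZ hZX hS hmem hz hx' ρ.f
  haveI := Localization.inverts (Vq hS) hS.toSubcategory.trW _ ρ.hs
  rw [← cancel_mono ((Vq hS).map ρ.s), hρ, LeftFraction.map_comp_map_s, hf, zero_comp]

lemma qset_hom_zero {U V : Set C} (hS : IsTriangulatedSubcat S)
    (h : ∀ {u v : C}, u ∈ U → v ∈ V → ∀ φ : (Vq hS).obj u ⟶ (Vq hS).obj v, φ = 0)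
    {a b : VerdierQuotient hS} (ha : a ∈ QSet (Vq hS) U) (hb : b ∈ QSet (Vq hS) V)
    (f : a ⟶ b) : f = 0 := by
  obtain ⟨u, hu, ⟨eu⟩⟩ := ha
  obtain ⟨v, hv, ⟨ev⟩⟩ := hb
  have h0 := h hu hv (eu.hom ≫ f ≫ ev.inv)
  calc f = eu.inv ≫ (eu.hom ≫ f ≫ ev.inv) ≫ ev.hom := by simp
  _ = 0 := by rw [h0]; simp

lemma qset_star {U V : Set C} (hS : IsTriangulatedSubcat S)
    (hUV : star U V = Set.univ) :
    star (QSet (Vq hS) U) (QSet (Vq hS) V) = Set.univ := by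
  ext d
  simp only [Set.mem_univ, iff_true]
  haveI := Localization.essSurj (Vq hS) hS.toSubcategory.trW
  obtain ⟨t, ⟨e⟩⟩ : ∃ t, Nonempty ((Vq hS).obj t ≅ d) := ⟨_, ⟨(Vq hS).objObjPreimageIso d⟩⟩
  have ht : t ∈ star U V := by rw [hUV]; trivial
  obtain ⟨u, v, hu, hv, f, g, h, hT⟩ := ht
  have hT' := (Vq hS).map_distinguished _ hT
  refine ⟨(Vq hS).obj u, (Vq hS).obj v, ⟨u, hu, ⟨Iso.refl _⟩⟩, ⟨v, hv, ⟨Iso.refl _⟩⟩,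
    (Vq hS).map f ≫ e.hom, e.inv ≫ (Vq hS).map g,
    (Vq hS).map h ≫ ((Vq hS).commShiftIso (1 : ℤ)).hom.app u, ?_⟩
  refine isomorphic_distinguished _ hT' _ ?_
  exact Triangle.isoMk _ _ (Iso.refl _) e.symm (Iso.refl _)
    (by show ((Vq hS).map f ≫ e.hom) ≫ e.inv = 𝟙 ((Vq hS).obj u) ≫ (Vq hS).map f; simp)
    (by show (e.inv ≫ (Vq hS).map g) ≫ 𝟙 ((Vq hS).obj v) = e.inv ≫ (Vq hS).map g; simp)
    (by
      show ((Vq hS).map h ≫ ((Vq hS).commShiftIso (1 : ℤ)).hom.app u) ≫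
          (shiftFunctor _ (1 : ℤ)).map (𝟙 ((Vq hS).obj u)) =
        𝟙 ((Vq hS).obj v) ≫ ((Vq hS).map h ≫ ((Vq hS).commShiftIso (1 : ℤ)).hom.app u)
      simp)

lemma qset_ext₂_right {U : Set C} (hS : IsTriangulatedSubcat S)
    (hU : IsTriangulatedSubcat U) (hSU : S ⊆ U)
    {a e b : VerdierQuotient hS} (f : a ⟶ e) (g : e ⟶ b) (h : b ⟶ a⟦(1 : ℤ)⟧)
    (hT : Triangle.mk f g h ∈ distTriang (VerdierQuotient hS))
    (ha : a ∈ QSet (Vq hS) U) (hb : b ∈ QSet (Vq hS) U) : e ∈ QSet (Vq hS) U := by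
  obtain ⟨a₀, ha₀, ⟨ea⟩⟩ := ha
  obtain ⟨b₀, hb₀, ⟨eb⟩⟩ := hb
  obtain ⟨ρ, hρ⟩ := Localization.exists_rightFraction (Vq hS) hS.toSubcategory.trW
    (eb.hom ≫ h ≫ ea.inv⟦(1 : ℤ)⟧' ≫ (((Vq hS).commShiftIso (1 : ℤ)).app a₀).inv)
  obtain ⟨c, sg, sh, hTs, hc⟩ := ρ.hs
  haveI := hU.closedP
  have hb' : ρ.X' ∈ U := hU.toSubcategory.ext_of_isTriangulatedClosed₁ _ hTs hb₀ (hSU hc)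
  obtain ⟨e₀, f₀, g₀, hTc⟩ := Pretriangulated.distinguished_cocone_triangle₂ ρ.f
  have he₀ : e₀ ∈ U := hU.ext₂ f₀ g₀ ρ.f hTc ha₀ hb'
  have hmap := (Vq hS).map_distinguished _ hTc
  haveI := Localization.inverts (Vq hS) hS.toSubcategory.trW _ ρ.hs
  have key : (Vq hS).map ρ.f = (Vq hS).map ρ.s ≫
      (eb.hom ≫ h ≫ ea.inv⟦(1 : ℤ)⟧' ≫ (((Vq hS).commShiftIso (1 : ℤ)).app a₀).inv) := by
    rw [hρ]
    exact (RightFraction.map_s_comp_map _ _ _).symm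
  refine ⟨e₀, he₀, obj₂_iso hmap hT ((asIso ((Vq hS).map ρ.s) : (Vq hS).obj ρ.X' ≅ _) ≪≫ eb) ea ?_⟩
  show ((Vq hS).map ρ.f ≫ ((Vq hS).commShiftIso (1 : ℤ)).hom.app a₀) ≫ ea.hom⟦(1 : ℤ)⟧' =
    ((asIso ((Vq hS).map ρ.s) : (Vq hS).obj ρ.X' ≅ _) ≪≫ eb).hom ≫ h
  rw [key]
  simp only [Category.assoc, Iso.app_inv, Iso.app_hom, Iso.inv_hom_id_app,
    Iso.inv_hom_id_app_assoc, Category.comp_id, Category.id_comp, Functor.comp_obj, Iso.trans_hom, asIso_hom,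
    ← Functor.map_comp, Iso.inv_hom_id, Functor.map_id]
  simp

lemma qset_ext₂_left {U : Set C} (hS : IsTriangulatedSubcat S)
    (hU : IsTriangulatedSubcat U) (hSU : S ⊆ U)
    {a e b : VerdierQuotient hS} (f : a ⟶ e) (g : e ⟶ b) (h : b ⟶ a⟦(1 : ℤ)⟧)
    (hT : Triangle.mk f g h ∈ distTriang (VerdierQuotient hS))
    (ha : a ∈ QSet (Vq hS) U) (hb : b ∈ QSet (Vq hS) U) : e ∈ QSet (Vq hS) U := by
  obtain ⟨a₀, ha₀, ⟨ea⟩⟩ := ha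
  obtain ⟨b₀, hb₀, ⟨eb⟩⟩ := hb
  obtain ⟨ρ, hρ⟩ := Localization.exists_leftFraction (Vq hS) hS.toSubcategory.trW
    (eb.hom ≫ h ≫ ea.inv⟦(1 : ℤ)⟧' ≫ (((Vq hS).commShiftIso (1 : ℤ)).app a₀).inv)
  obtain ⟨c, sg, sh, hTs, hc⟩ := ρ.hs
  have hm : ρ.Y' ∈ U := hU.ext₂ _ _ _ hTs (hU.shift_mem ha₀) (hSU hc)
  obtain ⟨k, f₀, h₀, hTc⟩ := Pretriangulated.distinguished_cocone_triangle₁ ρ.f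
  haveI := hU.closedP
  have hk : k ∈ U := hU.toSubcategory.ext_of_isTriangulatedClosed₁ _ hTc hb₀ hm
  have hrot := (Vq hS).map_distinguished _ (rot_of_distTriang _ hTc)
  have hT₁rot := rot_of_distTriang _ (rot_of_distTriang _ hT)
  haveI := Localization.inverts (Vq hS) hS.toSubcategory.trW _ ρ.hs
  have key : (eb.hom ≫ h ≫ ea.inv⟦(1 : ℤ)⟧' ≫
      (((Vq hS).commShiftIso (1 : ℤ)).app a₀).inv) ≫ (Vq hS).map ρ.s = (Vq hS).map ρ.f := by
    rw [hρ]
    exact LeftFraction.map_comp_map_s _ _ _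
  have J := isoTriangleOfIso₁₂ _ _ hrot hT₁rot eb
    ((asIso ((Vq hS).map ρ.s)).symm ≪≫ ((Vq hS).commShiftIso (1 : ℤ)).app a₀ ≪≫
      (shiftFunctor _ (1 : ℤ)).mapIso ea) (by
    show (Vq hS).map ρ.f ≫ ((asIso ((Vq hS).map ρ.s)).symm ≪≫
      ((Vq hS).commShiftIso (1 : ℤ)).app a₀ ≪≫ (shiftFunctor _ (1 : ℤ)).mapIso ea).hom = eb.hom ≫ h
    rw [← key]
    simp only [Category.assoc, IsIso.hom_inv_id_assoc, Iso.inv_hom_id_app_assoc,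
      ← Functor.map_comp_assoc, Iso.inv_hom_id, Functor.map_id, Category.id_comp,
      Category.comp_id, Iso.inv_hom_id_app]
    simp)
  exact ⟨k, hk, ⟨(shiftFunctor _ (1 : ℤ)).preimageIso
    ((((Vq hS).commShiftIso (1 : ℤ)).app k).symm ≪≫ Triangle.π₃.mapIso J)⟩⟩

lemma qset_ext₂_mid {U : Set C} (hS : IsTriangulatedSubcat S)
    (hU : IsTriangulatedSubcat U)
    (hvan : ∀ {u c : C}, u ∈ U → c ∈ S → ∀ f : u ⟶ c, f = 0)
    {a e b : VerdierQuotient hS} (f : a ⟶ e) (g : e ⟶ b) (h : b ⟶ a⟦(1 : ℤ)⟧)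
    (hT : Triangle.mk f g h ∈ distTriang (VerdierQuotient hS))
    (ha : a ∈ QSet (Vq hS) U) (hb : b ∈ QSet (Vq hS) U) : e ∈ QSet (Vq hS) U := by
  obtain ⟨a₀, ha₀, ⟨ea⟩⟩ := ha
  obtain ⟨b₀, hb₀, ⟨eb⟩⟩ := hb
  obtain ⟨ρ, hρ⟩ := Localization.exists_leftFraction (Vq hS) hS.toSubcategory.trW
    (eb.hom ≫ h ≫ ea.inv⟦(1 : ℤ)⟧' ≫ (((Vq hS).commShiftIso (1 : ℤ)).app a₀).inv)
  obtain ⟨c, sg, sh, hTs, hc⟩ := ρ.hs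
  have h0 : ρ.f ≫ sg = 0 := hvan hb₀ hc _
  obtain ⟨d, hd⟩ : ∃ d : b₀ ⟶ a₀⟦(1 : ℤ)⟧, ρ.f = d ≫ ρ.s := Triangle.coyoneda_exact₂ _ hTs ρ.f h0
  haveI := Localization.inverts (Vq hS) hS.toSubcategory.trW _ ρ.hs
  have key : @Eq ((Vq hS).obj b₀ ⟶ (Vq hS).obj (a₀⟦(1 : ℤ)⟧)) (eb.hom ≫ h ≫ ea.inv⟦(1 : ℤ)⟧' ≫
      (((Vq hS).commShiftIso (1 : ℤ)).app a₀).inv) ((Vq hS).map d) := by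
    rw [← cancel_mono ((Vq hS).map ρ.s), hρ, LeftFraction.map_comp_map_s, hd,
      Functor.map_comp]
  obtain ⟨e₀, f₀, g₀, hTc⟩ := Pretriangulated.distinguished_cocone_triangle₂ d
  have he₀ : e₀ ∈ U := hU.ext₂ f₀ g₀ d hTc ha₀ hb₀
  have hmap := (Vq hS).map_distinguished _ hTc
  refine ⟨e₀, he₀, obj₂_iso hmap hT eb ea ?_⟩
  show ((Vq hS).map d ≫ ((Vq hS).commShiftIso (1 : ℤ)).hom.app a₀) ≫ ea.hom⟦(1 : ℤ)⟧' = eb.hom ≫ h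
  rw [← key]
  simp only [Category.assoc, Iso.app_inv, Iso.app_hom, Iso.inv_hom_id_app,
    Iso.inv_hom_id_app_assoc, Category.comp_id, Category.id_comp, Functor.comp_obj, ← Functor.map_comp, Iso.inv_hom_id,
    Functor.map_id]
  simp

lemma qset_subcat {U : Set C} (hS : IsTriangulatedSubcat S) (hU : IsTriangulatedSubcat U)
    (hext : ∀ {a e b : VerdierQuotient hS} (f : a ⟶ e) (g : e ⟶ b) (h : b ⟶ a⟦(1 : ℤ)⟧),
      (Triangle.mk f g h ∈ distTriang (VerdierQuotient hS)) →
      a ∈ QSet (Vq hS) U → b ∈ QSet (Vq hS) U → e ∈ QSet (Vq hS) U) :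
    IsTriangulatedSubcat (QSet (Vq hS) U) := by
  refine ⟨⟨0, hU.zero_mem, ⟨(Vq hS).mapZeroObject⟩⟩, ?_, ?_, ?_, hext⟩
  · rintro a b i ⟨u, hu, ⟨j⟩⟩
    exact ⟨u, hu, ⟨j ≪≫ i⟩⟩
  · rintro a ⟨u, hu, ⟨j⟩⟩
    exact ⟨u⟦(1 : ℤ)⟧, hU.shift_mem hu,
      ⟨((Vq hS).commShiftIso (1 : ℤ)).app u ≪≫ (shiftFunctor _ (1 : ℤ)).mapIso j⟩⟩
  · rintro a ⟨u, hu, ⟨j⟩⟩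
    exact ⟨u⟦(-1 : ℤ)⟧, hU.unshift_mem hu,
      ⟨((Vq hS).commShiftIso (-1 : ℤ)).app u ≪≫ (shiftFunctor _ (-1 : ℤ)).mapIso j⟩⟩

end Auxiliary


/-- **Theorem C** (triangle of recollements).  Let `(X, Y)` and `(Y, Z)` be stable
t-structures in `C` with `Z * X = C`, and let `Q : C ⥤ C/(X ∩ Z)` be the Verdier quotient
functor.  Then `(Q(X), Q(Y))`, `(Q(Y), Q(Z))` and `(Q(Z), Q(X))` are stable t-structures
in `C/(X ∩ Z)`. -/
theorem statement7 {X Y Z : Set C} (hXY : IsStableTStructureIn Set.univ X Y)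
    (hYZ : IsStableTStructureIn Set.univ Y Z) (hZX : star Z X = Set.univ) :
    IsStableTStructureIn Set.univ
        (QSet (Vq (hXY.triU.inter hYZ.triV)) X) (QSet (Vq (hXY.triU.inter hYZ.triV)) Y) ∧
      IsStableTStructureIn Set.univ
        (QSet (Vq (hXY.triU.inter hYZ.triV)) Y) (QSet (Vq (hXY.triU.inter hYZ.triV)) Z) ∧
      IsStableTStructureIn Set.univ
        (QSet (Vq (hXY.triU.inter hYZ.triV)) Z) (QSet (Vq (hXY.triU.inter hYZ.triV)) X) := by
  have hX := hXY.triU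
  have hY := hXY.triV
  have hZ := hYZ.triV
  have hS : IsTriangulatedSubcat (X ∩ Z) := hXY.triU.inter hYZ.triV
  have hSX : X ∩ Z ⊆ X := Set.inter_subset_left
  have hSZ : X ∩ Z ⊆ Z := Set.inter_subset_right
  have hmem : ∀ {m : C}, m ∈ X → m ∈ Z → m ∈ X ∩ Z := fun h1 h2 => ⟨h1, h2⟩
  have tQX : IsTriangulatedSubcat (QSet (Vq hS) X) :=
    qset_subcat hS hX (fun f g h hT ha hb => qset_ext₂_right hS hX hSX f g h hT ha hb)
  have tQY : IsTriangulatedSubcat (QSet (Vq hS) Y) :=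
    qset_subcat hS hY (fun f g h hT ha hb =>
      qset_ext₂_mid hS hY (fun hu hc f => hYZ.hom_zero hu (hSZ hc) f) f g h hT ha hb)
  have tQZ : IsTriangulatedSubcat (QSet (Vq hS) Z) :=
    qset_subcat hS hZ (fun f g h hT ha hb => qset_ext₂_left hS hZ hSZ f g h hT ha hb)
  refine ⟨⟨Set.subset_univ _, Set.subset_univ _, tQX, tQY, ?_, qset_star hS hXY.star_eq⟩,
          ⟨Set.subset_univ _, Set.subset_univ _, tQY, tQZ, ?_, qset_star hS hYZ.star_eq⟩,
          ⟨Set.subset_univ _, Set.subset_univ _, tQZ, tQX, ?_, qset_star hS hZX⟩⟩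
  · exact fun hu hv f => qset_hom_zero hS
      (fun h1 h2 φ => hom_zero_XY hX hSX hS (fun a b => hXY.hom_zero a b) h1 h2 φ) hu hv f
  · exact fun hu hv f => qset_hom_zero hS
      (fun h1 h2 φ => hom_zero_YZ hZ hSZ hS (fun a b => hYZ.hom_zero a b) h1 h2 φ) hu hv f
  · exact fun hu hv f => qset_hom_zero hS
      (fun h1 h2 φ => hom_zero_ZX hX hZ hZX hSX hS hmem h1 h2 φ) hu hv f


end Paper
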